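/- Let φ : S(U) → V'[[ħ]] be a degree-zero linear map with φ(1) = 0, where V' is a graded commutative algebra, and let exp(φ) : S(U)[[ħ]] → V'[[ħ]] be its exponential. If S ∈ λ·U[[ħ]]⁰[[λ]] (a degree-zero formal power series in λ with zero constant term, with values in U[[ħ]]), then exp(φ)(e^S) = e^{φ(e^S)}, where e^S = Σ_{n≥0} S^n/n! in S(U)[[ħ]][[λ]] and both sides are extended by λ-linearity and continuity. -/

import Mathlib

open scoped Classical

namespace BVPaper

variable {k : Type*} [Field k] [CharZero k]
variable {A : Type*} [Ring A] [Algebra k A]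

/-- Left multiplication operator `L_a(b) = a*b`. -/
noncomputable def L (a : A) : A →ₗ[k] A := LinearMap.mulLeft k a

/-- Graded commutator of operators of degrees `p` and `q`:
`[P,Q] = P∘Q - (-1)^{pq} Q∘P`. -/
noncomputable def gcomm (p q : ℤ) (P Q : A →ₗ[k] A) : A →ₗ[k] A :=
  P ∘ₗ Q - (((p * q).negOnePow : ℤˣ) : ℤ) • (Q ∘ₗ P)

/-- Graded commutativity of a grading `𝒜` on `A` (Koszul rule). -/
def GradedComm (𝒜 : ℤ → Submodule k A) : Prop :=
  ∀ (i j : ℤ) (a b : A), a ∈ 𝒜 i → b ∈ 𝒜 j →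
    a * b = (((i * j).negOnePow : ℤˣ) : ℤ) • (b * a)

/-- `D` is a homogeneous operator of degree `d`. -/
def IsHomog (𝒜 : ℤ → Submodule k A) (d : ℤ) (D : A →ₗ[k] A) : Prop :=
  ∀ (i : ℤ) (a : A), a ∈ 𝒜 i → D a ∈ 𝒜 (i + d)

/-- `D`, of degree `d`, is a differential operator of order `≤ n`:
all `(n+1)`-fold iterated graded commutators with left multiplications vanish. -/
def IsDiffOp (𝒜 : ℤ → Submodule k A) : ℕ → ℤ → (A →ₗ[k] A) → Prop
  | 0, d, D => ∀ (i : ℤ) (a : A), a ∈ 𝒜 i → gcomm d i D (L a) = 0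
  | n + 1, d, D => ∀ (i : ℤ) (a : A), a ∈ 𝒜 i → IsDiffOp 𝒜 n (d + i) (gcomm d i D (L a))

/-- Iterated graded commutator `[[…[Q, L_{a_1}],…], L_{a_m}]` where the list records
the degrees of the (homogeneous) elements `a_i`. -/
noncomputable def iterOp (Q : A →ₗ[k] A) (q : ℤ) : List (ℤ × A) → (A →ₗ[k] A)
  | [] => Q
  | (i, a) :: t => iterOp (gcomm q i Q (L a)) (q + i) t

/-- The Koszul sign of a permutation `σ` acting on elements of degrees `d i`. -/
def koszulSign {n : ℕ} (d : Fin n → ℤ) (σ : Equiv.Perm (Fin n)) : ℤˣ :=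
  ∏ p ∈ Finset.univ.filter (fun p : Fin n × Fin n => p.1 < p.2 ∧ σ p.2 < σ p.1),
    (d p.1 * d p.2).negOnePow

/-- An `(n, m-n)`-shuffle. -/
def IsShuffle (m n : ℕ) (σ : Equiv.Perm (Fin m)) : Prop :=
  (∀ i j : Fin m, i < j → (j : ℕ) < n → σ i < σ j) ∧
  (∀ i j : Fin m, i < j → n ≤ (i : ℕ) → σ i < σ j)



/-! ### List-level infrastructure -/

/-- chunks of `l` of sizes given by `t` -/
def chunk {α : Type*} : List ℕ → List α → List (List α)
  | [], _ => []
  | n :: t, l => l.take n :: chunk t (l.drop n)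

@[simp] lemma chunk_nil {α : Type*} (l : List α) : chunk [] l = [] := rfl
@[simp] lemma chunk_cons {α : Type*} (n : ℕ) (t : List ℕ) (l : List α) :
    chunk (n :: t) l = l.take n :: chunk t (l.drop n) := rfl

@[simp] lemma length_chunk {α : Type*} (t : List ℕ) (l : List α) :
    (chunk t l).length = t.length := by
  induction t generalizing l with
  | nil => rfl
  | cons n t ih => simp [ih]

lemma map_chunk {α β : Type*} (f : α → β) (t : List ℕ) (l : List α) :
    chunk t (l.map f) = (chunk t l).map (List.map f) := by
  induction t generalizing l with
  | nil => rfl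
  | cons n t ih => simp [ih, List.map_take, List.map_drop, ← List.map_drop]

lemma join_chunk {α : Type*} (t : List ℕ) (l : List α) (h : t.sum = l.length) :
    (chunk t l).flatten = l := by
  induction t generalizing l with
  | nil => simpa using (List.length_eq_zero_iff.1 (by simpa using h.symm)).symm
  | cons n t ih =>
      simp only [chunk_cons, List.flatten_cons]
      rw [ih _ (by simp [List.length_drop, ← h, Nat.add_sub_cancel_left]), List.take_append_drop]

lemma map_length_chunk {α : Type*} (t : List ℕ) (l : List α) (h : t.sum = l.length) :
    (chunk t l).map List.length = t := by
  induction t generalizing l with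
  | nil => rfl
  | cons n t ih =>
      have hn : n ≤ l.length := by simp at h; omega
      simp only [chunk_cons, List.map_cons, List.length_take]
      rw [min_eq_left hn, ih _ (by simp only [List.length_drop]; simp at h; omega)]

lemma chunk_join {α : Type*} (L : List (List α)) :
    chunk (L.map List.length) L.flatten = L := by
  induction L with
  | nil => rfl
  | cons a L ih =>
      simp only [List.map_cons, List.flatten_cons, chunk_cons]
      rw [List.take_left, List.drop_left, ih]

lemma split_eq_chunk {α : Type*} {n : ℕ} (l : List α) (c : Composition n) :
    l.splitWrtComposition c = chunk c.blocks l := by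
  rw [List.splitWrtComposition]
  generalize c.blocks = t
  induction t generalizing l with
  | nil => rfl
  | cons n t ih => rw [List.splitWrtCompositionAux_cons, chunk_cons, ih]

/-- compositions of `N` as a finset of lists -/
noncomputable def cps (N : ℕ) : Finset (List ℕ) :=
  Finset.image (Composition.blocks (n := N)) Finset.univ

lemma mem_cps {N : ℕ} {l : List ℕ} : l ∈ cps N ↔ (∀ i ∈ l, 0 < i) ∧ l.sum = N := by
  constructor
  · rintro hl
    obtain ⟨c, -, rfl⟩ := Finset.mem_image.1 hl
    exact ⟨fun i hi => c.blocks_pos hi, c.blocks_sum⟩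
  · rintro ⟨h1, h2⟩
    exact Finset.mem_image.2 ⟨⟨l, fun hi => h1 _ hi, h2⟩, Finset.mem_univ _, rfl⟩

lemma sum_comp_eq {β : Type*} [AddCommMonoid β] (N : ℕ) (F : List ℕ → β) :
    ∑ c : Composition N, F c.blocks = ∑ l ∈ cps N, F l := by
  rw [cps, Finset.sum_image]
  intro c _ c' _ h
  exact Composition.ext h

/-! ### Permutations of lists -/

/-- permuted list -/
def permL (l : List ℕ) (σ : Equiv.Perm (Fin l.length)) : List ℕ :=
  List.ofFn fun i => l.get (σ i)

@[simp] lemma length_permL (l : List ℕ) (σ : Equiv.Perm (Fin l.length)) :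
    (permL l σ).length = l.length := by simp [permL]

lemma sum_permL (l : List ℕ) (σ : Equiv.Perm (Fin l.length)) :
    (permL l σ).sum = l.sum := by
  rw [permL, List.sum_ofFn]
  rw [Equiv.sum_comp σ (l.get ·)]
  conv_rhs => rw [← List.ofFn_get l, List.sum_ofFn]

lemma mem_permL {l : List ℕ} {σ : Equiv.Perm (Fin l.length)} {a : ℕ}
    (h : a ∈ permL l σ) : a ∈ l := by
  rw [permL, List.mem_ofFn] at h
  obtain ⟨i, rfl⟩ := h
  exact l.get_mem _

lemma permL_mem_cps {N : ℕ} {l : List ℕ} (hl : l ∈ cps N) (σ : Equiv.Perm (Fin l.length)) :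
    permL l σ ∈ cps N := by
  rw [mem_cps] at hl ⊢
  exact ⟨fun i hi => hl.1 i (mem_permL hi), by rw [sum_permL]; exact hl.2⟩

/-- cast a permutation along a length equality -/
def pc {l l' : List ℕ} (h : l'.length = l.length) (σ : Equiv.Perm (Fin l.length)) :
    Equiv.Perm (Fin l'.length) := (finCongr h.symm).permCongr σ

lemma pc_apply {l l' : List ℕ} (h : l'.length = l.length) (σ : Equiv.Perm (Fin l.length))
    (i : Fin l'.length) : ((pc h σ) i : ℕ) = (σ (Fin.cast h i) : ℕ) := by
  simp [pc, Equiv.permCongr_apply]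

lemma pc_inv {l l' : List ℕ} (h : l'.length = l.length) (σ : Equiv.Perm (Fin l.length)) :
    (pc h σ)⁻¹ = pc h σ⁻¹ := by
  ext i
  simp [pc, Equiv.Perm.inv_def, Equiv.permCongr_def, Equiv.symm_trans_apply]

@[simp] lemma permL_one (l : List ℕ) : permL l 1 = l := by
  simp [permL, List.ofFn_get]

lemma permL_permL (l : List ℕ) (σ : Equiv.Perm (Fin l.length))
    (τ : Equiv.Perm (Fin l.length)) :
    permL (permL l σ) (pc (length_permL l σ) τ) = permL l (σ * τ) := by
  apply List.ext_getElem (by simp)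
  intro i h1 h2
  simp only [permL, List.getElem_ofFn, List.get_eq_getElem, Equiv.Perm.mul_apply]
  congr 1

lemma sig_perm_eq {l₁ l₂ : List ℕ} (h : l₁ = l₂) (σ₁ : Equiv.Perm (Fin l₁.length))
    (σ₂ : Equiv.Perm (Fin l₂.length))
    (hσ : ∀ (i : ℕ) (h₁ : i < l₁.length) (h₂ : i < l₂.length),
      ((σ₁ ⟨i, h₁⟩ : Fin _) : ℕ) = ((σ₂ ⟨i, h₂⟩ : Fin _) : ℕ)) :
    (⟨l₁, σ₁⟩ : Σ l : List ℕ, Equiv.Perm (Fin l.length)) = ⟨l₂, σ₂⟩ := by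
  subst h
  congr 1
  exact Equiv.ext fun i => Fin.ext (by simpa using hσ i.1 i.2 i.2)

lemma sum_perm {β : Type*} [AddCommMonoid β] (N : ℕ) (f : List ℕ → β) :
    ∑ l ∈ cps N, ∑ σ : Equiv.Perm (Fin l.length), f (permL l σ)
      = ∑ l ∈ cps N, (l.length).factorial • f l := by
  have key : ∑ l ∈ cps N, ∑ σ : Equiv.Perm (Fin l.length), f (permL l σ)
      = ∑ l ∈ cps N, ∑ _σ : Equiv.Perm (Fin l.length), f l := by
    rw [Finset.sum_sigma' (cps N) (fun l => (Finset.univ : Finset (Equiv.Perm (Fin l.length))))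
        (fun l σ => f (permL l σ)),
      Finset.sum_sigma' (cps N) (fun l => (Finset.univ : Finset (Equiv.Perm (Fin l.length))))
        (fun l _σ => f l)]
    refine Finset.sum_nbij'
      (i := fun p => ⟨permL p.1 p.2, pc (length_permL p.1 p.2) p.2⁻¹⟩)
      (j := fun p => ⟨permL p.1 p.2, pc (length_permL p.1 p.2) p.2⁻¹⟩) ?_ ?_ ?_ ?_ ?_
    · rintro ⟨l, σ⟩ hp
      simp only [Finset.mem_sigma] at hp ⊢
      exact ⟨permL_mem_cps hp.1 σ, Finset.mem_univ _⟩
    · rintro ⟨l, σ⟩ hp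
      simp only [Finset.mem_sigma] at hp ⊢
      exact ⟨permL_mem_cps hp.1 σ, Finset.mem_univ _⟩
    · rintro ⟨l, σ⟩ _
      refine sig_perm_eq ?_ _ _ ?_
      · rw [permL_permL, mul_inv_cancel, permL_one]
      · intro i h1 h2
        rw [pc_apply, pc_inv, pc_apply]
        simp
    · rintro ⟨l, σ⟩ _
      refine sig_perm_eq ?_ _ _ ?_
      · rw [permL_permL, mul_inv_cancel, permL_one]
      · intro i h1 h2
        rw [pc_apply, pc_inv, pc_apply]
        simp
    · rintro ⟨l, σ⟩ _
      rfl
  rw [key]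
  refine Finset.sum_congr rfl fun l _ => ?_
  rw [Finset.sum_const, Finset.card_univ, Fintype.card_perm, Fintype.card_fin]

/-! ### Sections of a list of finsets -/

/-- the finset of lists picking one element from each finset in the list -/
noncomputable def lsec {β : Type*} : List (Finset β) → Finset (List β)
  | [] => {[]}
  | s :: t => (s ×ˢ lsec t).image fun p => p.1 :: p.2

lemma mem_lsec {β : Type*} {Fs : List (Finset β)} {L : List β} :
    L ∈ lsec Fs ↔ List.Forall₂ (· ∈ ·) L Fs := by
  induction Fs generalizing L with
  | nil =>
      simp only [lsec, Finset.mem_singleton]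
      constructor
      · rintro rfl; exact List.Forall₂.nil
      · rintro h; cases h; rfl
  | cons s t ih =>
      simp only [lsec, Finset.mem_image, Finset.mem_product]
      constructor
      · rintro ⟨⟨b, M⟩, ⟨hb, hM⟩, rfl⟩
        exact List.Forall₂.cons hb (ih.1 hM)
      · rintro h
        cases h with
        | cons hb hM => exact ⟨⟨_, _⟩, ⟨hb, ih.2 hM⟩, rfl⟩

lemma prod_sum {β B : Type*} [Semiring B] (h : β → B) :
    ∀ Fs : List (Finset β),
      (Fs.map fun s => ∑ b ∈ s, h b).prod = ∑ L ∈ lsec Fs, (L.map h).prod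
  | [] => by simp [lsec]
  | s :: t => by
      rw [List.map_cons, List.prod_cons, prod_sum h t, lsec, Finset.sum_image
        (by rintro ⟨a, M⟩ _ ⟨a', M'⟩ _ h; simpa using h), Finset.sum_product,
        Finset.sum_mul_sum]
      simp

lemma map_smul_prod {k B : Type*} [CommSemiring k] [Semiring B] [Algebra k B]
    (g : List ℕ → B) (w : List ℕ → k) :
    ∀ L : List (List ℕ),
      (L.map fun b => w b • g b).prod = ((L.map w).prod) • (L.map g).prod
  | [] => by simp
  | a :: L => by
      rw [List.map_cons, List.prod_cons, map_smul_prod g w L]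
      rw [List.map_cons, List.prod_cons, List.map_cons, List.prod_cons]
      rw [smul_mul_assoc, mul_smul_comm, smul_smul]

lemma inv_list_prod {k : Type*} [Field k] :
    ∀ xs : List k, xs.prod⁻¹ = (xs.map Inv.inv).prod
  | [] => by simp
  | a :: xs => by rw [List.prod_cons, mul_inv, inv_list_prod xs, List.map_cons, List.prod_cons]

lemma forall₂_self_map {α γ : Type*} {f : α → γ} {r : α → γ → Prop} :
    ∀ {L : List α}, (∀ a ∈ L, r a (f a)) → List.Forall₂ r L (L.map f)
  | [], _ => List.Forall₂.nil
  | a :: L, h => List.Forall₂.cons (h a (by simp))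
      (forall₂_self_map fun b hb => h b (by simp [hb]))

lemma forall₂_cps_facts {LL : List (List ℕ)} {e : List ℕ}
    (h : List.Forall₂ (fun c b => c ∈ cps b) LL e) :
    LL.map List.sum = e ∧ ∀ c ∈ LL, ∀ x ∈ c, 0 < x := by
  induction h with
  | nil => exact ⟨rfl, by simp⟩
  | @cons c b LL' e' hc htail ih =>
      refine ⟨?_, ?_⟩
      · simp only [List.map_cons, ih.1, (mem_cps.1 hc).2]
      · intro d hd x hx
        rcases List.mem_cons.1 hd with rfl | hd'
        · exact (mem_cps.1 hc).1 x hx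
        · exact ih.2 d hd' x hx

lemma sig2_eq {γ : Type*} {a a' : List ℕ} {b b' : γ} (h1 : a = a') (h2 : b = b') :
    (⟨a, b⟩ : (_ : List ℕ) × γ) = ⟨a', b'⟩ := by subst h1; subst h2; rfl

lemma chunk_bij {β : Type*} [AddCommMonoid β] (N : ℕ) (F : List (List ℕ) → β) :
    ∑ l ∈ cps N, ∑ t ∈ cps l.length, F (chunk t l)
      = ∑ e ∈ cps N, ∑ LL ∈ lsec (e.map cps), F LL := by
  rw [Finset.sum_sigma' (cps N) (fun l => cps l.length) (fun l t => F (chunk t l)),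
    Finset.sum_sigma' (cps N) (fun e => lsec (e.map cps)) (fun _ LL => F LL)]
  refine Finset.sum_nbij'
    (i := fun p => ⟨(chunk p.2 p.1).map List.sum, chunk p.2 p.1⟩)
    (j := fun p => ⟨p.2.flatten, p.2.map List.length⟩) ?_ ?_ ?_ ?_ ?_
  · rintro ⟨l, t⟩ hp
    simp only [Finset.mem_sigma, mem_cps] at hp
    obtain ⟨⟨hlpos, hlsum⟩, ⟨htpos, htsum⟩⟩ := hp
    have hlen : (chunk t l).map List.length = t := map_length_chunk t l htsum
    have hflat : (chunk t l).flatten = l := join_chunk t l htsum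
    have hne : ∀ c ∈ chunk t l, c ≠ [] := by
      intro c hc hemp
      have : c.length ∈ t := by rw [← hlen]; exact List.mem_map_of_mem hc
      rw [hemp] at this
      exact absurd (htpos 0 this) (by simp)
    have hcpos : ∀ c ∈ chunk t l, ∀ x ∈ c, 0 < x := by
      intro c hc x hx
      exact hlpos x (by rw [← hflat]; exact List.mem_flatten.2 ⟨c, hc, hx⟩)
    simp only [Finset.mem_sigma]
    constructor
    · rw [mem_cps]
      constructor
      · intro i hi
        obtain ⟨c, hc, rfl⟩ := List.mem_map.1 hi
        exact List.sum_pos c (hcpos c hc) (hne c hc)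
      · rw [← List.sum_flatten, hflat, hlsum]
    · rw [mem_lsec, List.map_map]
      refine forall₂_self_map fun c hc => ?_
      rw [Function.comp_apply, mem_cps]
      exact ⟨hcpos c hc, rfl⟩
  · rintro ⟨e, LL⟩ hp
    simp only [Finset.mem_sigma, mem_cps, mem_lsec] at hp
    obtain ⟨⟨hepos, hesum⟩, hLL⟩ := hp
    have hLL' : List.Forall₂ (fun c b => c ∈ cps b) LL e := by
      rwa [List.forall₂_map_right_iff] at hLL
    obtain ⟨hsum, hpos⟩ := forall₂_cps_facts hLL'
    have hne : ∀ c ∈ LL, c ≠ [] := by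
      intro c hc hemp
      have : c.sum ∈ e := by rw [← hsum]; exact List.mem_map_of_mem hc
      have := hepos _ this
      simp [hemp] at this
    simp only [Finset.mem_sigma]
    constructor
    · rw [mem_cps]
      refine ⟨?_, ?_⟩
      · intro x hx
        obtain ⟨c, hc, hxc⟩ := List.mem_flatten.1 hx
        exact hpos c hc x hxc
      · rw [List.sum_flatten, hsum, hesum]
    · rw [mem_cps]
      refine ⟨?_, ?_⟩
      · intro x hx
        obtain ⟨c, hc, rfl⟩ := List.mem_map.1 hx
        exact List.length_pos_iff.2 (hne c hc)
      · rw [List.length_flatten]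
  · rintro ⟨l, t⟩ hp
    simp only [Finset.mem_sigma, mem_cps] at hp
    obtain ⟨⟨hlpos, hlsum⟩, ⟨htpos, htsum⟩⟩ := hp
    exact sig2_eq (join_chunk t l htsum) (map_length_chunk t l htsum)
  · rintro ⟨e, LL⟩ hp
    simp only [Finset.mem_sigma, mem_cps, mem_lsec] at hp
    obtain ⟨⟨hepos, hesum⟩, hLL⟩ := hp
    have hLL' : List.Forall₂ (fun c b => c ∈ cps b) LL e := by
      rwa [List.forall₂_map_right_iff] at hLL
    obtain ⟨hsum, hpos⟩ := forall₂_cps_facts hLL'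
    refine sig2_eq ?_ (chunk_join LL)
    rw [chunk_join LL, hsum]
  · rintro ⟨l, t⟩ _
    rfl

lemma chunky {k B : Type*} [Field k] [Ring B] [Algebra k B] (Ψ : List ℕ → B)
    (t l' : List ℕ) (h : t.sum = l'.length) :
    (((t.map Nat.factorial).prod : ℕ) : k)⁻¹ • ((chunk t l').map Ψ).prod
      = ((chunk t l').map (fun b => ((b.length.factorial : ℕ) : k)⁻¹ • Ψ b)).prod := by
  rw [map_smul_prod]
  congr 1
  have h1 : (chunk t l').map (fun b : List ℕ => ((b.length.factorial : ℕ) : k)⁻¹)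
      = t.map (fun n => ((n.factorial : ℕ) : k)⁻¹) := by
    conv_rhs => rw [← map_length_chunk t l' h, List.map_map]
    rfl
  rw [h1, Nat.cast_list_prod, List.map_map, inv_list_prod, List.map_map]
  rfl


theorem statement18 (𝒜 : ℤ → Submodule k A) (hcomm : GradedComm 𝒜)
    (hone : (1 : A) ∈ 𝒜 0)
    {B : Type*} [Ring B] [Algebra k B]
    (W : Submodule k A) (hW : W ≤ 𝒜 0)
    (φ Φ : A →ₗ[k] B) (hφ1 : φ 1 = 0)
    (hΦ : ∀ (m : ℕ) (x : Fin m → A), (∀ i, x i ∈ W) →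
      Φ ((List.ofFn x).prod)
        = ∑ c : Composition m, ∑ σ : Equiv.Perm (Fin m),
            ((((c.length).factorial * (c.blocks.map Nat.factorial).prod : ℕ) : k))⁻¹ •
              (((List.ofFn fun i => x (σ i)).splitWrtComposition c).map
                (fun blk => φ blk.prod)).prod)
    (S : ℕ → A) (hS0 : S 0 = 0) (hSW : ∀ p : ℕ, S p ∈ W) :
    ∀ N : ℕ,
      Φ (∑ c : Composition N, (((c.length).factorial : ℕ) : k)⁻¹ • (c.blocks.map S).prod)
        = ∑ c : Composition N, (((c.length).factorial : ℕ) : k)⁻¹ •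
            ((c.blocks.map fun b =>
                φ (∑ c' : Composition b,
                    (((c'.length).factorial : ℕ) : k)⁻¹ • (c'.blocks.map S).prod)).prod) := by
  intro N
  -- abbreviations
  set Ψ : List ℕ → B := fun l' => φ ((l'.map S).prod) with hΨdef
  set Ψ' : List ℕ → B := fun l' => ((l'.length.factorial : ℕ) : k)⁻¹ • Ψ l' with hΨ'def
  -- the inner exponential
  have gdef : ∀ b : ℕ,
      φ (∑ c' : Composition b, (((c'.length).factorial : ℕ) : k)⁻¹ • (c'.blocks.map S).prod)
        = ∑ l' ∈ cps b, Ψ' l' := by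
    intro b
    rw [map_sum]
    simp only [map_smul]
    simp only [← Composition.blocks_length]
    exact sum_comp_eq b (fun l' => ((l'.length.factorial : ℕ) : k)⁻¹ • φ ((l'.map S).prod))
  -- RHS
  have hR : (∑ c : Composition N, (((c.length).factorial : ℕ) : k)⁻¹ •
        ((c.blocks.map fun b =>
            φ (∑ c' : Composition b,
                (((c'.length).factorial : ℕ) : k)⁻¹ • (c'.blocks.map S).prod)).prod))
      = ∑ e ∈ cps N, ∑ LL ∈ lsec (e.map cps),
          ((LL.length.factorial : ℕ) : k)⁻¹ • (LL.map Ψ').prod := by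
    simp only [gdef]
    simp only [← Composition.blocks_length]
    rw [sum_comp_eq N (fun e => ((e.length.factorial : ℕ) : k)⁻¹ •
      (e.map (fun b => ∑ l' ∈ cps b, Ψ' l')).prod)]
    refine Finset.sum_congr rfl fun e he => ?_
    have hmm : e.map (fun b => ∑ l' ∈ cps b, Ψ' l')
        = (e.map cps).map (fun s => ∑ l' ∈ s, Ψ' l') := by rw [List.map_map]; rfl
    rw [hmm, prod_sum, Finset.smul_sum]
    refine Finset.sum_congr rfl fun LL hLL => ?_
    have hlen : LL.length = e.length := by
      have h2 := (mem_lsec.1 hLL).length_eq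
      simpa using h2
    rw [hlen]
  rw [hR]
  -- LHS
  have hL1 : Φ (∑ c : Composition N,
        (((c.length).factorial : ℕ) : k)⁻¹ • (c.blocks.map S).prod)
      = ∑ l ∈ cps N, ((l.length.factorial : ℕ) : k)⁻¹ • Φ ((l.map S).prod) := by
    rw [map_sum]
    simp only [map_smul]
    simp only [← Composition.blocks_length]
    exact sum_comp_eq N (fun l => ((l.length.factorial : ℕ) : k)⁻¹ • Φ ((l.map S).prod))
  rw [hL1]
  -- the per-list expansion
  set F : List ℕ → B := fun l'' => ((l''.length.factorial : ℕ) : k)⁻¹ •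
    ∑ t ∈ cps l''.length, ((t.length.factorial : ℕ) : k)⁻¹ •
      ((chunk t l'').map Ψ').prod with hFdef
  have hL2 : ∀ l ∈ cps N, ((l.length.factorial : ℕ) : k)⁻¹ • Φ ((l.map S).prod)
      = ∑ σ : Equiv.Perm (Fin l.length), F (permL l σ) := by
    intro l hl
    have hofn : l.map S = List.ofFn (fun i : Fin l.length => S (l.get i)) := by
      conv_lhs => rw [← List.ofFn_get l]
      rw [List.map_ofFn]
      rfl
    rw [hofn, hΦ l.length (fun i => S (l.get i)) (fun i => hSW _)]
    have hofn2 : ∀ σ : Equiv.Perm (Fin l.length),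
        (List.ofFn fun i => S (l.get (σ i))) = (permL l σ).map S := by
      intro σ
      rw [permL, List.map_ofFn]
      rfl
    simp only [hofn2, split_eq_chunk, map_chunk, List.map_map, Function.comp_def]
    simp only [← Composition.blocks_length]
    rw [sum_comp_eq l.length (fun t => ∑ σ : Equiv.Perm (Fin l.length),
      (((t.length.factorial * (t.map Nat.factorial).prod : ℕ)) : k)⁻¹ •
        ((chunk t (permL l σ)).map Ψ).prod)]
    rw [Finset.sum_comm, Finset.smul_sum]
    refine Finset.sum_congr rfl fun σ _ => ?_
    rw [hFdef]
    simp only [length_permL]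
    congr 1
    refine Finset.sum_congr rfl fun t ht => ?_
    rw [Nat.cast_mul, mul_inv, mul_smul]
    congr 1
    have hts : t.sum = (permL l σ).length := by
      rw [length_permL]; exact (mem_cps.1 ht).2
    exact chunky Ψ t (permL l σ) hts
  rw [Finset.sum_congr rfl hL2, sum_perm N F]
  have hL3 : ∀ l ∈ cps N, (l.length).factorial • F l
      = ∑ t ∈ cps l.length, ((t.length.factorial : ℕ) : k)⁻¹ • ((chunk t l).map Ψ').prod := by
    intro l hl
    rw [hFdef]
    rw [← Nat.cast_smul_eq_nsmul k, smul_smul, mul_inv_cancel₀, one_smul]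
    exact Nat.cast_ne_zero.2 (Nat.factorial_ne_zero _)
  rw [Finset.sum_congr rfl hL3]
  have hL4 : ∀ l ∈ cps N, (∑ t ∈ cps l.length,
        ((t.length.factorial : ℕ) : k)⁻¹ • ((chunk t l).map Ψ').prod)
      = ∑ t ∈ cps l.length,
        (((chunk t l).length.factorial : ℕ) : k)⁻¹ • ((chunk t l).map Ψ').prod := by
    intro l hl
    refine Finset.sum_congr rfl fun t ht => ?_
    rw [length_chunk]
  rw [Finset.sum_congr rfl hL4,
    chunk_bij N (fun LL => ((LL.length.factorial : ℕ) : k)⁻¹ • (LL.map Ψ').prod)]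


end BVPaper
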